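/- Fix n ≥ 1 and k ∈ {1, …, n}. The unital completely positive map φ_k : X_n → M_2(ℂ) that sends ⊕_{j=1}^n [[α, β_j],[γ_j, α]] ∈ X_n to its k-th 2×2 diagonal block [[α, β_k],[γ_k, α]] is pure in the cone CP(X_n, M_2(ℂ)): whenever ϑ, ω : X_n → M_2(ℂ) are completely positive linear maps with ϑ + ω = φ_k, there exists s ∈ [0,1] such that ϑ = s·φ_k and ω = (1−s)·φ_k. -/

import Mathlib

open scoped ComplexOrder

/-- The `(m·|ι|) × (m·|ι|)` matrix obtained from an `m × m` array of `ι × ι` matrices. -/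
def blockMat {ι : Type} {m : ℕ} (x : Fin m → Fin m → Matrix ι ι ℂ) :
    Matrix (Fin m × ι) (Fin m × ι) ℂ :=
  Matrix.of fun p q => x p.1 q.1 p.2 q.2

/-- Complete positivity for a linear map from a matrix operator system `S` into
`M₂(ℂ)`. -/
def IsCPFun {ι : Type} [Fintype ι] (S : Submodule ℂ (Matrix ι ι ℂ))
    (φ : S →ₗ[ℂ] Matrix (Fin 2) (Fin 2) ℂ) : Prop :=
  ∀ (m : ℕ) (x : Fin m → Fin m → S),
    (blockMat fun i j => (x i j : Matrix ι ι ℂ)).PosSemidef →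
    (blockMat fun i j => φ (x i j)).PosSemidef

/-- Projection of a `2n × 2n` matrix onto its `k`-th `2 × 2` diagonal block. -/
noncomputable def projBlock (n : ℕ) (k : Fin n) :
    Matrix (Fin n × Fin 2) (Fin n × Fin 2) ℂ →ₗ[ℂ] Matrix (Fin 2) (Fin 2) ℂ where
  toFun x := Matrix.of fun i j => x (k, i) (k, j)
  map_add' _ _ := rfl
  map_smul' _ _ := rfl

/-- The block-diagonal matrix `⊕ₖ [[α, βₖ],[γₖ, α]]` in `M_{2n}(ℂ)`. -/
def xMat (n : ℕ) (α : ℂ) (β γ : Fin n → ℂ) :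
    Matrix (Fin n × Fin 2) (Fin n × Fin 2) ℂ :=
  Matrix.of fun p q => if p.1 = q.1 then !![α, β p.1; γ p.1, α] p.2 q.2 else 0

/-- The matrix operator system `Xₙ = { ⊕ₖ [[α, βₖ],[γₖ, α]] } ⊆ M_{2n}(ℂ)`. -/
noncomputable def XSys (n : ℕ) : Submodule ℂ (Matrix (Fin n × Fin 2) (Fin n × Fin 2) ℂ) :=
  Submodule.span ℂ {x | ∃ α β γ, x = xMat n α β γ}

/-- The ucp map `φ_k : Xₙ → M₂(ℂ)` sending `⊕ⱼ [[α, βⱼ],[γⱼ, α]]` to its `k`-th `2 × 2`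
diagonal block. -/
noncomputable def phiBlock (n : ℕ) (k : Fin n) : XSys n →ₗ[ℂ] Matrix (Fin 2) (Fin 2) ℂ :=
  (projBlock n k).comp (XSys n).subtype

/-! ### Auxiliary material -/

open scoped Matrix

namespace BlockPure

variable {n : ℕ}

lemma xMat_mem (α : ℂ) (β γ : Fin n → ℂ) : xMat n α β γ ∈ XSys n :=
  Submodule.subset_span ⟨α, β, γ, rfl⟩

lemma xMat_add (α α' : ℂ) (β β' γ γ' : Fin n → ℂ) :
    xMat n (α + α') (β + β') (γ + γ') = xMat n α β γ + xMat n α' β' γ' := by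
  ext ⟨j, i⟩ ⟨j', i'⟩
  simp only [xMat, Matrix.add_apply, Matrix.of_apply]
  split
  · fin_cases i <;> fin_cases i' <;> simp
  · simp

lemma xMat_smul (c α : ℂ) (β γ : Fin n → ℂ) :
    xMat n (c * α) (c • β) (c • γ) = c • xMat n α β γ := by
  ext ⟨j, i⟩ ⟨j', i'⟩
  simp only [xMat, Matrix.smul_apply, Matrix.of_apply]
  split
  · fin_cases i <;> fin_cases i' <;> simp [mul_comm]
  · simp

/-- Every element of `XSys n` is an `xMat`, with parameters read off from entries. -/
lemma mem_xsys_repr (k : Fin n) {x : Matrix (Fin n × Fin 2) (Fin n × Fin 2) ℂ}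
    (hx : x ∈ XSys n) :
    x = xMat n (x (k, 0) (k, 0)) (fun j => x (j, 0) (j, 1)) (fun j => x (j, 1) (j, 0)) := by
  induction hx using Submodule.span_induction with
  | mem x h =>
    obtain ⟨α, β, γ, rfl⟩ := h
    simp [xMat]
  | zero =>
    ext ⟨j, i⟩ ⟨j', i'⟩
    simp only [xMat, Matrix.zero_apply, Matrix.of_apply]
    split
    · fin_cases i <;> fin_cases i' <;> simp
    · rfl
  | add x y hx hy ihx ihy =>
    conv_lhs => rw [ihx, ihy]
    rw [← xMat_add]
    simp [Matrix.add_apply]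
    rfl
  | smul a x hx ihx =>
    conv_lhs => rw [ihx]
    rw [← xMat_smul]
    simp [Matrix.smul_apply]
    rfl

lemma xMat_decomp (α : ℂ) (β γ : Fin n → ℂ) :
    xMat n α β γ = α • xMat n 1 0 0 + (∑ j, β j • xMat n 0 (Pi.single j 1) 0)
      + ∑ j, γ j • xMat n 0 0 (Pi.single j 1) := by
  ext ⟨j, i⟩ ⟨j', i'⟩
  simp only [Matrix.add_apply, Matrix.smul_apply, Matrix.sum_apply, xMat, Matrix.of_apply]
  by_cases h : j = j'
  · subst h
    fin_cases i <;> fin_cases i' <;>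
      simp [Pi.single_apply, Finset.sum_ite_eq', mul_ite, smul_eq_mul]
  · simp [h]

def sqMat (β : Fin n → ℂ) : Matrix (Fin n × Fin 2) (Fin n × Fin 2) ℂ :=
  Matrix.of fun r p => if r.2 = (0 : Fin 2) ∧ r.1 = p.1 then (if p.2 = 0 then 1 else β p.1) else 0

lemma xMat_posSemidef (β : Fin n → ℂ) (hβ : ∀ j, star (β j) * β j = 1) :
    (xMat n 1 β (fun j => star (β j))).PosSemidef := by
  have key : xMat n 1 β (fun j => star (β j)) = (sqMat β)ᴴ * sqMat β := by
    ext ⟨j, i⟩ ⟨j', i'⟩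
    simp only [Matrix.mul_apply, Matrix.conjTranspose_apply, Matrix.of_apply, xMat, sqMat,
      Fintype.sum_prod_type, Fin.sum_univ_two]
    have hβ' : ∀ j, β j * (starRingEnd ℂ) (β j) = 1 := fun j => by
      rw [mul_comm]; exact hβ j
    have hβ'' : ∀ j, (starRingEnd ℂ) (β j) * β j = 1 := hβ
    by_cases h : j = j'
    · subst h
      fin_cases i <;> fin_cases i' <;>
        simp [Finset.sum_ite_eq', apply_ite, hβ'', hβ']
    · have h' : ¬ j' = j := fun e => h e.symm
      fin_cases i <;> fin_cases i' <;>
        simp [Finset.sum_ite_eq', apply_ite, h, h']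
  rw [key]
  exact Matrix.posSemidef_conjTranspose_mul_self _

/-- `xMat n 1 0 0` is the identity matrix. -/
lemma xMat_one : xMat n 1 0 0 = (1 : Matrix (Fin n × Fin 2) (Fin n × Fin 2) ℂ) := by
  ext ⟨j, i⟩ ⟨j', i'⟩
  simp only [xMat, Matrix.one_apply, Matrix.of_apply, Prod.mk.injEq]
  by_cases h : j = j'
  · subst h
    fin_cases i <;> fin_cases i' <;> simp
  · simp [h]


def rMat (z : ℂ) : Matrix (Fin 2) (Fin 2) ℂ := !![1, z; star z, 1]

lemma rankOne {z : ℂ} (hz : star z * z = 1) {T : Matrix (Fin 2) (Fin 2) ℂ}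
    (hT : T.PosSemidef) (hRT : (rMat z - T).PosSemidef) :
    T = T 0 0 • rMat z := by
  have hz' : (starRingEnd ℂ) z * z = 1 := hz
  set u : Fin 2 → ℂ := ![z, -1] with hu
  have hq : star u ⬝ᵥ (rMat z) *ᵥ u = 0 := by
    simp only [hu, rMat, Matrix.mulVec, dotProduct, Fin.sum_univ_two, Complex.star_def,
      Matrix.cons_val_zero, Matrix.cons_val_one, Matrix.head_cons, Pi.star_apply,
      Matrix.cons_val', Matrix.empty_val', Matrix.cons_val_fin_one, Matrix.head_fin_const,
      star_neg, star_one, map_neg, map_one, Matrix.of_apply]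
    linear_combination -hz'
  have ha := hT.dotProduct_mulVec_nonneg u
  have hb := hRT.dotProduct_mulVec_nonneg u
  rw [Matrix.sub_mulVec, dotProduct_sub, hq, zero_sub, le_neg, neg_zero] at hb
  have hT0 : star u ⬝ᵥ T *ᵥ u = 0 := le_antisymm hb ha
  have hker := (hT.dotProduct_mulVec_zero_iff u).mp hT0
  have e0 := congr_fun hker 0
  have e1 := congr_fun hker 1
  simp [hu, Matrix.mulVec, dotProduct, Fin.sum_univ_two] at e0 e1
  have herm00 := congr_fun (congr_fun hT.1 0) 0
  have herm10 := congr_fun (congr_fun hT.1 1) 0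
  simp [Matrix.conjTranspose_apply, Complex.star_def] at herm00 herm10
  have e0' := congrArg (starRingEnd ℂ) e0
  simp only [map_add, map_mul, map_neg, map_zero] at e0'
  have hT01 : T 0 1 = T 0 0 * z := by linear_combination -e0
  have hT10 : T 1 0 = T 0 0 * (starRingEnd ℂ) z := by
    linear_combination -herm10 - e0' + (starRingEnd ℂ) z * herm00
  have hT11 : T 1 1 = T 0 0 := by
    linear_combination -e1 + z * hT10 + T 0 0 * hz'
  ext i j
  fin_cases i <;> fin_cases j <;>
    simp [rMat, hT01, hT10, hT11, Complex.star_def, mul_comm]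

lemma solveJ {M : Matrix (Fin 2) (Fin 2) ℂ} {c d : ℂ}
    (h1 : M = c • rMat 1) (h2 : M = d • rMat Complex.I) : M = 0 := by
  have h := h1.symm.trans h2
  have e00 := congrFun (congrFun h 0) 0
  have e01 := congrFun (congrFun h 0) 1
  simp only [rMat, Matrix.smul_apply, smul_eq_mul, Matrix.cons_val_zero, Matrix.cons_val_one,
    Matrix.head_cons, Matrix.of_apply, Matrix.cons_val', Matrix.empty_val',
    Matrix.cons_val_fin_one, mul_one] at e00 e01
  have hc0 : c * (1 - Complex.I) = 0 := by linear_combination e01 - Complex.I * e00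
  have hc : c = 0 := by
    rcases mul_eq_zero.mp hc0 with h | h
    · exact h
    · exfalso
      rw [sub_eq_zero] at h
      simpa using congrArg Complex.im h
  rw [h1, hc, zero_smul]

lemma solvePQ {P Q : Matrix (Fin 2) (Fin 2) ℂ}
    (h1 : ((1:ℂ) - -1) • P + (star (1:ℂ) - star (-1:ℂ)) • Q = 0)
    (h2 : (Complex.I - -Complex.I) • P + (star Complex.I - star (-Complex.I)) • Q = 0) :
    P = 0 ∧ Q = 0 := by
  have n1 : ((1:ℂ) - -1) = 2 := by norm_num
  have n2 : (star (1:ℂ) - star (-1:ℂ)) = 2 := by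
    simp only [star_one, star_neg]; norm_num
  have n3 : (Complex.I - -Complex.I) = 2 * Complex.I := by ring
  have n4 : (star Complex.I - star (-Complex.I)) = -(2 * Complex.I) := by
    simp only [Complex.star_def, Complex.conj_I, map_neg]; ring
  rw [n1, n2] at h1
  rw [n3, n4] at h2
  have hadd : P + Q = 0 := by
    have h : (2:ℂ) • (P + Q) = 0 := by rw [smul_add]; exact h1
    rcases smul_eq_zero.mp h with h | h
    · norm_num at h
    · exact h
  have hQ : Q = -P := eq_neg_of_add_eq_zero_right hadd
  have hsub : P - Q = 0 := by
    have h : (2 * Complex.I) • (P - Q) = 0 := by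
      rw [smul_sub, sub_eq_add_neg, ← neg_smul]; exact h2
    rcases smul_eq_zero.mp h with h | h
    · simp [Complex.I_ne_zero] at h
    · exact h
  rw [hQ, sub_neg_eq_add] at hsub
  have hP : P = 0 := by
    have h : (2:ℂ) • P = 0 := by rw [two_smul]; exact hsub
    rcases smul_eq_zero.mp h with h | h
    · norm_num at h
    · exact h
  exact ⟨hP, by rw [hQ, hP, neg_zero]⟩

lemma solveK {A P Q : Matrix (Fin 2) (Fin 2) ℂ} {c1 c2 c3 c4 : ℂ}
    (h1 : A + (1:ℂ) • P + (1:ℂ) • Q = c1 • rMat 1)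
    (h2 : A + Complex.I • P + (-Complex.I) • Q = c2 • rMat Complex.I)
    (h3 : A + (-1:ℂ) • P + (-1:ℂ) • Q = c3 • rMat (-1))
    (h4 : A + (-Complex.I) • P + Complex.I • Q = c4 • rMat (-Complex.I)) :
    A = A 0 0 • (1 : Matrix (Fin 2) (Fin 2) ℂ) ∧
      P = A 0 0 • !![0, 1; 0, 0] ∧ Q = A 0 0 • !![0, 0; 1, 0] := by
  have d1 := congrFun (congrFun h1 0) 0
  have e1 := congrFun (congrFun h1 0) 1
  have f1 := congrFun (congrFun h1 1) 0
  have k1 := congrFun (congrFun h1 1) 1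
  have d2 := congrFun (congrFun h2 0) 0
  have e2 := congrFun (congrFun h2 0) 1
  have f2 := congrFun (congrFun h2 1) 0
  have k2 := congrFun (congrFun h2 1) 1
  have d3 := congrFun (congrFun h3 0) 0
  have e3 := congrFun (congrFun h3 0) 1
  have f3 := congrFun (congrFun h3 1) 0
  have k3 := congrFun (congrFun h3 1) 1
  have d4 := congrFun (congrFun h4 0) 0
  have e4 := congrFun (congrFun h4 0) 1
  have f4 := congrFun (congrFun h4 1) 0
  have k4 := congrFun (congrFun h4 1) 1
  simp only [rMat, Matrix.add_apply, Matrix.smul_apply, smul_eq_mul, Matrix.cons_val_zero,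
    Matrix.cons_val_one, Matrix.head_cons, Matrix.of_apply, Matrix.cons_val',
    Matrix.empty_val', Matrix.cons_val_fin_one, mul_one, star_one, star_neg,
    Complex.star_def, Complex.conj_I, map_neg, neg_neg, one_mul, neg_mul, mul_neg,
    Matrix.vecHead, Matrix.vecTail]
    at d1 e1 f1 k1 d2 e2 f2 k2 d3 e3 f3 k3 d4 e4 f4 k4
  have hp00 : P 0 0 = 0 := by
    linear_combination (-(1:ℂ)/4) * ((e1 - d1) - (e2 - Complex.I*d2) + (e3 + d3)
      - (e4 + Complex.I*d4))
      + ((P 0 0 - Q 0 0)/2) * Complex.I_sq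
  have hq00 : Q 0 0 = 0 := by
    linear_combination (-(1:ℂ)/4) * ((f1 - d1) - (f2 + Complex.I*d2) + (f3 + d3)
      - (f4 - Complex.I*d4))
      + ((Q 0 0 - P 0 0)/2) * Complex.I_sq
  have hb : A 0 1 = 0 := by
    linear_combination ((1:ℂ)/4) * ((e1 - d1) + (e2 - Complex.I*d2) + (e3 + d3)
      + (e4 + Complex.I*d4)) + (-(1:ℂ)/4) * ((f1 - d1) - (f2 + Complex.I*d2) + (f3 + d3)
      - (f4 - Complex.I*d4))
  have hb' : A 1 0 = 0 := by
    linear_combination ((1:ℂ)/4) * ((f1 - d1) + (f2 + Complex.I*d2) + (f3 + d3)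
      + (f4 - Complex.I*d4)) + (-(1:ℂ)/4) * ((e1 - d1) - (e2 - Complex.I*d2) + (e3 + d3)
      - (e4 + Complex.I*d4))
  have ha2 : A 1 1 = A 0 0 := by
    linear_combination ((1:ℂ)/4) * ((k1 - d1) + (k2 - d2) + (k3 - d3) + (k4 - d4))
  have hp01 : P 0 1 = A 0 0 := by
    linear_combination ((1:ℂ)/4) * ((e1 - d1) - Complex.I*(e2 - Complex.I*d2) - (e3 + d3)
      + Complex.I*(e4 + Complex.I*d4))
      + ((P 0 1 - A 0 0 - Q 0 1)/2) * Complex.I_sq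
  have hq01 : Q 0 1 = 0 := by
    linear_combination ((1:ℂ)/4) * ((e1 - d1) + Complex.I*(e2 - Complex.I*d2) - (e3 + d3)
      - Complex.I*(e4 + Complex.I*d4))
      + ((Q 0 1 + A 0 0 - P 0 1)/2) * Complex.I_sq
  have hp10 : P 1 0 = 0 := by
    linear_combination ((1:ℂ)/4) * ((f1 - d1) - Complex.I*(f2 + Complex.I*d2) - (f3 + d3)
      + Complex.I*(f4 - Complex.I*d4))
      + ((P 1 0 + A 0 0 - Q 1 0)/2) * Complex.I_sq
  have hq10 : Q 1 0 = A 0 0 := by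
    linear_combination ((1:ℂ)/4) * ((f1 - d1) + Complex.I*(f2 + Complex.I*d2) - (f3 + d3)
      - Complex.I*(f4 - Complex.I*d4))
      + ((Q 1 0 - A 0 0 - P 1 0)/2) * Complex.I_sq
  have hp11 : P 1 1 = 0 := by
    linear_combination ((1:ℂ)/4) * ((k1 - d1) - Complex.I*(k2 - d2) - (k3 - d3)
      + Complex.I*(k4 - d4)) + (-(1:ℂ)/4) * ((e1 - d1) - (e2 - Complex.I*d2) + (e3 + d3)
      - (e4 + Complex.I*d4))
      + ((P 1 1 - Q 1 1)/2) * Complex.I_sq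
  have hq11 : Q 1 1 = 0 := by
    linear_combination ((1:ℂ)/4) * ((k1 - d1) + Complex.I*(k2 - d2) - (k3 - d3)
      - Complex.I*(k4 - d4)) + (-(1:ℂ)/4) * ((f1 - d1) - (f2 + Complex.I*d2) + (f3 + d3)
      - (f4 - Complex.I*d4))
      + ((Q 1 1 - P 1 1)/2) * Complex.I_sq
  refine ⟨?_, ?_, ?_⟩ <;> ext i j <;> fin_cases i <;> fin_cases j <;>
    simp [Matrix.one_apply, hp00, hq00, hb, hb', ha2, hp01, hq01, hp10, hq10, hp11, hq11]

lemma cp_pos {ι : Type} [Fintype ι] {S : Submodule ℂ (Matrix ι ι ℂ)}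
    {φ : S →ₗ[ℂ] Matrix (Fin 2) (Fin 2) ℂ} (hφ : IsCPFun S φ) (x : S)
    (hx : (x : Matrix ι ι ℂ).PosSemidef) : (φ x).PosSemidef := by
  have h := hφ 1 (fun _ _ => x) (by
    have e : (blockMat fun _ _ : Fin 1 => (x : Matrix ι ι ℂ))
        = (x : Matrix ι ι ℂ).submatrix Prod.snd Prod.snd := rfl
    rw [e]; exact hx.submatrix _)
  have h2 := h.submatrix (fun i : Fin 2 => ((0 : Fin 1), i))
  have e : (blockMat fun _ _ : Fin 1 => φ x).submatrix
      (fun i : Fin 2 => ((0 : Fin 1), i)) (fun i : Fin 2 => ((0 : Fin 1), i)) = φ x := rfl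
  rwa [e] at h2


end BlockPure
section MAIN
namespace BlockPure

variable {n : ℕ}

noncomputable def yElt (n : ℕ) (β : Fin n → ℂ) : XSys n :=
  ⟨xMat n 1 β (fun j => star (β j)), xMat_mem _ _ _⟩

noncomputable def bE (n : ℕ) : XSys n := ⟨xMat n 1 0 0, xMat_mem _ _ _⟩
noncomputable def bB (n : ℕ) (j : Fin n) : XSys n := ⟨xMat n 0 (Pi.single j 1) 0, xMat_mem _ _ _⟩
noncomputable def bC (n : ℕ) (j : Fin n) : XSys n := ⟨xMat n 0 0 (Pi.single j 1), xMat_mem _ _ _⟩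

lemma eval_decomp (ϑ : XSys n →ₗ[ℂ] Matrix (Fin 2) (Fin 2) ℂ) (x : XSys n)
    (α : ℂ) (β γ : Fin n → ℂ)
    (hx : (x : Matrix (Fin n × Fin 2) (Fin n × Fin 2) ℂ) = xMat n α β γ) :
    ϑ x = α • ϑ (bE n) + (∑ j, β j • ϑ (bB n j)) + ∑ j, γ j • ϑ (bC n j) := by
  have hx' : x = α • bE n + (∑ j, β j • bB n j) + ∑ j, γ j • bC n j := by
    apply Subtype.ext
    rw [hx, xMat_decomp]
    simp [bE, bB, bC]
  rw [hx']
  simp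

lemma unit_update {f : Fin n → ℂ} (hf : ∀ l, star (f l) * f l = 1) (j : Fin n) {w : ℂ}
    (hw : star w * w = 1) :
    ∀ l, star (Function.update f j w l) * Function.update f j w l = 1 := by
  intro l
  rcases eq_or_ne l j with rfl | hl
  · simpa using hw
  · simpa [Function.update_of_ne hl] using hf l

lemma unit_one : ∀ l : Fin n, star ((fun _ => (1:ℂ)) l) * (fun _ => (1:ℂ)) l = 1 := by
  intro l; simp

lemma unit_negone : star (-1 : ℂ) * (-1) = 1 := by simp
lemma unit_I : star Complex.I * Complex.I = 1 := by
  simp [Complex.star_def, Complex.conj_I]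
lemma unit_negI : star (-Complex.I) * (-Complex.I) = 1 := by
  simp [Complex.star_def, Complex.conj_I]

lemma projBlock_apply (k : Fin n) (x : Matrix (Fin n × Fin 2) (Fin n × Fin 2) ℂ) :
    projBlock n k x = Matrix.of fun i j => x (k, i) (k, j) := rfl

lemma phi_y (k : Fin n) (β : Fin n → ℂ) : phiBlock n k (yElt n β) = rMat (β k) := by
  ext i j
  fin_cases i <;> fin_cases j <;>
    simp [phiBlock, projBlock_apply, yElt, xMat, rMat]

lemma coe_bE : ((bE n : XSys n) : Matrix (Fin n × Fin 2) (Fin n × Fin 2) ℂ) = 1 := xMat_one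

lemma phi_E (k : Fin n) : phiBlock n k (bE n) = 1 := by
  ext i j
  fin_cases i <;> fin_cases j <;>
    simp [phiBlock, projBlock_apply, coe_bE, Matrix.one_apply, Prod.ext_iff]

end BlockPure
end MAIN
open BlockPure

/-- The `k`-th block projection `φ_k : Xₙ → M₂(ℂ)` is pure in `CP(Xₙ, M₂(ℂ))`. -/
theorem block_projection_on_Xn_is_pure (n : ℕ) (hn : 1 ≤ n) (k : Fin n)
    (ϑ ω : XSys n →ₗ[ℂ] Matrix (Fin 2) (Fin 2) ℂ)
    (hϑ : IsCPFun (XSys n) ϑ) (hω : IsCPFun (XSys n) ω)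
    (hsum : ϑ + ω = phiBlock n k) :
    ∃ s : ℝ, 0 ≤ s ∧ s ≤ 1 ∧
      ϑ = (s : ℂ) • phiBlock n k ∧ ω = ((1 - s : ℝ) : ℂ) • phiBlock n k := by
  classical
  set A := ϑ (bE n) with hAdef
  set P : Fin n → Matrix (Fin 2) (Fin 2) ℂ := fun j => ϑ (bB n j) with hPdef
  set Q : Fin n → Matrix (Fin 2) (Fin 2) ℂ := fun j => ϑ (bC n j) with hQdef
  -- the key rank-one fact
  have key : ∀ β : Fin n → ℂ, (∀ l, star (β l) * β l = 1) →
      ϑ (yElt n β) = (ϑ (yElt n β)) 0 0 • rMat (β k) := by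
    intro β hβ
    have hpsd : ((yElt n β : XSys n) : Matrix (Fin n × Fin 2) (Fin n × Fin 2) ℂ).PosSemidef :=
      xMat_posSemidef β hβ
    have hT : (ϑ (yElt n β)).PosSemidef := cp_pos hϑ _ hpsd
    have hsum' : ϑ (yElt n β) + ω (yElt n β) = rMat (β k) := by
      have h := LinearMap.congr_fun hsum (yElt n β)
      rwa [LinearMap.add_apply, phi_y] at h
    have hRT : (rMat (β k) - ϑ (yElt n β)).PosSemidef := by
      rw [← hsum', add_sub_cancel_left]
      exact cp_pos hω _ hpsd
    exact rankOne (hβ k) hT hRT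
  -- evaluation of ϑ on the yElt's
  have hval : ∀ β : Fin n → ℂ,
      ϑ (yElt n β) = A + (∑ j, β j • P j) + ∑ j, star (β j) • Q j := by
    intro β
    have h := eval_decomp ϑ (yElt n β) 1 β (fun j => star (β j)) rfl
    rwa [one_smul] at h
  -- Step 1: the off-`k` coefficients vanish
  have hPQ : ∀ j, j ≠ k → P j = 0 ∧ Q j = 0 := by
    intro j hjk
    have hdiff : ∀ z w w' : ℂ, star z * z = 1 → star w * w = 1 → star w' * w' = 1 →
        ∃ c : ℂ, (w - w') • P j + (star w - star w') • Q j = c • rMat z := by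
      intro z w w' hz hw hw'
      set g : Fin n → ℂ := Function.update (fun _ => (1:ℂ)) k z with hg
      have hgu : ∀ l, star (g l) * g l = 1 := unit_update unit_one k hz
      set β : Fin n → ℂ := Function.update g j w with hβdef
      set β' : Fin n → ℂ := Function.update g j w' with hβ'def
      have hβu : ∀ l, star (β l) * β l = 1 := unit_update hgu j hw
      have hβ'u : ∀ l, star (β' l) * β' l = 1 := unit_update hgu j hw'
      have hbk : β k = z := by
        rw [hβdef, Function.update_of_ne (Ne.symm hjk), hg, Function.update_self]
      have hbk' : β' k = z := by
        rw [hβ'def, Function.update_of_ne (Ne.symm hjk), hg, Function.update_self]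
      have k1 := key β hβu
      have k2 := key β' hβ'u
      rw [hbk] at k1
      rw [hbk'] at k2
      refine ⟨(ϑ (yElt n β)) 0 0 - (ϑ (yElt n β')) 0 0, ?_⟩
      have hs1 : (∑ l, β l • P l) - ∑ l, β' l • P l = (w - w') • P j := by
        rw [← Finset.sum_sub_distrib]
        rw [Finset.sum_eq_single_of_mem j (Finset.mem_univ j) (fun b _ hb => by
          rw [hβdef, hβ'def, Function.update_of_ne hb, Function.update_of_ne hb, sub_self])]
        rw [← sub_smul, hβdef, hβ'def, Function.update_self, Function.update_self]
      have hs2 : (∑ l, star (β l) • Q l) - ∑ l, star (β' l) • Q l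
          = (star w - star w') • Q j := by
        rw [← Finset.sum_sub_distrib]
        rw [Finset.sum_eq_single_of_mem j (Finset.mem_univ j) (fun b _ hb => by
          rw [hβdef, hβ'def, Function.update_of_ne hb, Function.update_of_ne hb, sub_self])]
        rw [← sub_smul, hβdef, hβ'def, Function.update_self, Function.update_self]
      conv_rhs => rw [sub_smul, ← k1, ← k2]
      rw [hval β, hval β', ← hs1, ← hs2]
      abel
    obtain ⟨c1, E1⟩ := hdiff 1 1 (-1) (by simp) (by simp) unit_negone
    obtain ⟨c2, E2⟩ := hdiff Complex.I 1 (-1) unit_I (by simp) unit_negone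
    obtain ⟨d1, F1⟩ := hdiff 1 Complex.I (-Complex.I) (by simp) unit_I unit_negI
    obtain ⟨d2, F2⟩ := hdiff Complex.I Complex.I (-Complex.I) unit_I unit_I unit_negI
    exact solvePQ (solveJ E1 E2) (solveJ F1 F2)
  -- Step 2: solve for the k-th block data
  have hKz : ∀ z : ℂ, star z * z = 1 →
      ∃ c : ℂ, A + z • P k + star z • Q k = c • rMat z := by
    intro z hz
    set β : Fin n → ℂ := Function.update (fun _ => (1:ℂ)) k z with hβdef
    have hβu : ∀ l, star (β l) * β l = 1 := unit_update unit_one k hz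
    have hbk : β k = z := by rw [hβdef, Function.update_self]
    have k1 := key β hβu
    rw [hbk] at k1
    refine ⟨(ϑ (yElt n β)) 0 0, ?_⟩
    rw [← k1, hval β]
    have hs1 : (∑ l, β l • P l) = z • P k := by
      rw [Finset.sum_eq_single_of_mem k (Finset.mem_univ k) (fun b _ hb => by
        rw [(hPQ b hb).1, smul_zero])]
      rw [hβdef, Function.update_self]
    have hs2 : (∑ l, star (β l) • Q l) = star z • Q k := by
      rw [Finset.sum_eq_single_of_mem k (Finset.mem_univ k) (fun b _ hb => by
        rw [(hPQ b hb).2, smul_zero])]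
      rw [hβdef, Function.update_self]
    rw [hs1, hs2]
  obtain ⟨c1, h1⟩ := hKz 1 (by simp)
  obtain ⟨c2, h2⟩ := hKz Complex.I unit_I
  obtain ⟨c3, h3⟩ := hKz (-1) unit_negone
  obtain ⟨c4, h4⟩ := hKz (-Complex.I) unit_negI
  rw [star_one] at h1
  rw [show star Complex.I = -Complex.I by simp [Complex.star_def, Complex.conj_I]] at h2
  rw [show star (-1 : ℂ) = (-1 : ℂ) by simp] at h3
  rw [show star (-Complex.I) = Complex.I by simp [Complex.star_def, Complex.conj_I]] at h4
  obtain ⟨hA, hPk, hQk⟩ := solveK h1 h2 h3 h4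
  -- positivity facts about `a = A 0 0`
  have hApsd : A.PosSemidef := by
    apply cp_pos hϑ (bE n)
    rw [coe_bE]
    exact Matrix.PosSemidef.one
  have ha0 : (0 : ℂ) ≤ A 0 0 := by
    have h := hApsd.dotProduct_mulVec_nonneg (Pi.single 0 1)
    simpa [dotProduct, Matrix.mulVec, Fin.sum_univ_two, Pi.single_apply] using h
  have hωE : ω (bE n) = 1 - A := by
    have h := LinearMap.congr_fun hsum (bE n)
    rw [LinearMap.add_apply, phi_E] at h
    rw [← h, hAdef]
    abel
  have hωpsd : ((1 : Matrix (Fin 2) (Fin 2) ℂ) - A).PosSemidef := by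
    rw [← hωE]
    apply cp_pos hω (bE n)
    rw [coe_bE]
    exact Matrix.PosSemidef.one
  have ha1 : (0 : ℂ) ≤ 1 - A 0 0 := by
    have h := hωpsd.dotProduct_mulVec_nonneg (Pi.single 0 1)
    simpa [dotProduct, Matrix.mulVec, Fin.sum_univ_two, Pi.single_apply,
      Matrix.sub_apply, Matrix.one_apply] using h
  set s : ℝ := (A 0 0).re with hsdef
  have haR : A 0 0 = (s : ℂ) := by
    have him : (A 0 0).im = 0 := by
      have := (Complex.le_def.mp ha0).2
      simpa using this.symm
    exact Complex.ext rfl (by simpa using him)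
  have hs0 : 0 ≤ s := by
    have := (Complex.le_def.mp ha0).1
    simpa using this
  have hs1 : s ≤ 1 := by
    have := (Complex.le_def.mp ha1).1
    simp only [Complex.zero_re, Complex.sub_re, Complex.one_re] at this
    linarith
  -- final evaluation of ϑ on all of XSys n
  have hϑx : ∀ x : XSys n, ϑ x = (A 0 0) • phiBlock n k x := by
    intro x
    have hx := mem_xsys_repr k x.2
    rw [eval_decomp ϑ x _ _ _ hx]
    have hs1' : (∑ j, (x : Matrix (Fin n × Fin 2) (Fin n × Fin 2) ℂ) (j, 0) (j, 1) • ϑ (bB n j))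
        = (x : Matrix (Fin n × Fin 2) (Fin n × Fin 2) ℂ) (k, 0) (k, 1) • (A 0 0 • !![0, 1; 0, 0]) := by
      rw [Finset.sum_eq_single_of_mem k (Finset.mem_univ k) (fun b _ hb => by
        rw [show ϑ (bB n b) = P b from rfl, (hPQ b hb).1, smul_zero])]
      rw [show ϑ (bB n k) = P k from rfl, hPk]
    have hs2' : (∑ j, (x : Matrix (Fin n × Fin 2) (Fin n × Fin 2) ℂ) (j, 1) (j, 0) • ϑ (bC n j))
        = (x : Matrix (Fin n × Fin 2) (Fin n × Fin 2) ℂ) (k, 1) (k, 0) • (A 0 0 • !![0, 0; 1, 0]) := by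
      rw [Finset.sum_eq_single_of_mem k (Finset.mem_univ k) (fun b _ hb => by
        rw [show ϑ (bC n b) = Q b from rfl, (hPQ b hb).2, smul_zero])]
      rw [show ϑ (bC n k) = Q k from rfl, hQk]
    rw [hs1', hs2', show ϑ (bE n) = A from rfl, hA]
    have hphi : phiBlock n k x =
        !![(x : Matrix (Fin n × Fin 2) (Fin n × Fin 2) ℂ) (k, 0) (k, 0),
           (x : Matrix (Fin n × Fin 2) (Fin n × Fin 2) ℂ) (k, 0) (k, 1);
           (x : Matrix (Fin n × Fin 2) (Fin n × Fin 2) ℂ) (k, 1) (k, 0),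
           (x : Matrix (Fin n × Fin 2) (Fin n × Fin 2) ℂ) (k, 0) (k, 0)] := by
      ext i j
      fin_cases i <;> fin_cases j <;> simp only [phiBlock, projBlock, LinearMap.comp_apply,
        Submodule.subtype_apply, LinearMap.coe_mk, AddHom.coe_mk, Matrix.of_apply,
        Matrix.cons_val_zero, Matrix.cons_val_one, Matrix.head_cons, Matrix.cons_val',
        Matrix.empty_val', Matrix.cons_val_fin_one, Matrix.head_fin_const]
      · rfl
      · rfl
      · rfl
      · conv_lhs => rw [hx]
        exact if_pos rfl
    rw [hphi]
    ext i j
    fin_cases i <;> fin_cases j <;>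
      simp [Matrix.one_apply, Matrix.add_apply, Matrix.smul_apply, smul_eq_mul] <;> ring
  refine ⟨s, hs0, hs1, ?_, ?_⟩
  · apply LinearMap.ext
    intro x
    rw [LinearMap.smul_apply, hϑx x, haR]
  · apply LinearMap.ext
    intro x
    have h := LinearMap.congr_fun hsum x
    rw [LinearMap.add_apply] at h
    have hωx : ω x = phiBlock n k x - ϑ x := by rw [← h]; abel
    rw [LinearMap.smul_apply, hωx, hϑx x, haR]
    push_cast
    rw [sub_smul, one_smul]
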